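/- For every n ≥ 0 there exists a function v_n which is a linear combination of e₀, …, e_n with nonzero coefficient of e_n, such that J₀[v_n] = λ_n v_n, where λ₀ = -(ln 2)/4 and λ_n = -1/4 - 1/(4n) for n ≥ 1. Hence each λ_n is an eigenvalue of J₀. -/

import Mathlib

open Real Finset

/-- The diagonal values of the upper-triangular operator `J₀`. -/
noncomputable def lamJ (n : ℕ) : ℝ :=
  if n = 0 then -(Real.log 2) / 4 else -1/4 - 1/(4 * (n:ℝ))

/-- Action of `J₀` on the cosine basis function `e_n(θ) = cos(nθ)`:
`J₀[e₀] = -(ln 2)/4 · e₀`; for `n = 2p`,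
`J₀[e_n] = λ_n e_n - (1/(2n)) Σ_{k<p} (1 - δ_{0k}/2) e_{2k}`; for `n = 2p+1`,
`J₀[e_n] = λ_n e_n - (1/(2n)) Σ_{k<p} e_{2k+1}`. -/
noncomputable def J0e (n : ℕ) (θ : ℝ) : ℝ :=
  if n = 0 then -(Real.log 2) / 4
  else if Even n then
    lamJ n * Real.cos (n * θ)
      - (1 / (2 * (n:ℝ))) *
          ∑ k ∈ Finset.range (n / 2),
            (1 - (if k = 0 then (1:ℝ) else 0) / 2) * Real.cos (2 * (k:ℝ) * θ)
  else
    lamJ n * Real.cos (n * θ)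
      - (1 / (2 * (n:ℝ))) *
          ∑ k ∈ Finset.range (n / 2), Real.cos ((2 * (k:ℝ) + 1) * θ)

noncomputable def Mcoef (k j : ℕ) : ℝ :=
  if j = k then lamJ k
  else if k % 2 = j % 2 ∧ j < k then
    -(1/(2*(k:ℝ))) * (1 - (if j = 0 then (1:ℝ) else 0)/2)
  else 0

lemma Mcoef_eq_zero_of_lt {k j : ℕ} (h : k < j) : Mcoef k j = 0 := by
  unfold Mcoef
  rw [if_neg (by omega), if_neg (by push_neg; intro _; omega)]

lemma lamJ_ne {j n : ℕ} (h : j < n) : lamJ n ≠ lamJ j := by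
  have hn : n ≠ 0 := by omega
  rcases Nat.eq_zero_or_pos j with hj | hj
  · subst hj
    simp only [lamJ, if_neg hn, if_pos rfl]
    have h2 : Real.log 2 < 1 := by
      have := Real.log_two_lt_d9; linarith
    have hn' : (0:ℝ) < (n:ℝ) := by exact_mod_cast Nat.pos_of_ne_zero hn
    have : 0 < 1/(4*(n:ℝ)) := by positivity
    intro heq
    norm_num at heq
    have hinv : (0:ℝ) < ((n:ℝ))⁻¹ := by positivity
    linarith
  · have hj' : j ≠ 0 := by omega
    simp only [lamJ, if_neg hn, if_neg hj']
    intro heq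
    have hn' : (0:ℝ) < (n:ℝ) := by exact_mod_cast Nat.pos_of_ne_zero hn
    have hj'' : (0:ℝ) < (j:ℝ) := by exact_mod_cast hj
    have : (n:ℝ) = (j:ℝ) := by field_simp at heq; linarith
    have : n = j := by exact_mod_cast this
    omega

lemma sum_even_helper (p : ℕ) (f : ℕ → ℝ) (h : ∀ j, j % 2 = 1 → f j = 0) :
    ∑ j ∈ range (2*p), f j = ∑ i ∈ range p, f (2*i) := by
  induction p with
  | zero => simp
  | succ p ih =>
    have : 2 * (p+1) = (2*p + 1) + 1 := by omega
    rw [this, sum_range_succ, sum_range_succ, ih, sum_range_succ,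
        h (2*p+1) (by omega)]
    ring

lemma sum_odd_helper (p : ℕ) (f : ℕ → ℝ) (h : ∀ j, j % 2 = 0 → f j = 0) :
    ∑ j ∈ range (2*p+1), f j = ∑ i ∈ range p, f (2*i+1) := by
  induction p with
  | zero => simpa using h 0 rfl
  | succ p ih =>
    have : 2 * (p+1) + 1 = (2*p + 1) + 1 + 1 := by omega
    rw [this, sum_range_succ, sum_range_succ, ih, sum_range_succ,
        h (2*p+2) (by omega)]
    ring

lemma J0e_eq (k : ℕ) (θ : ℝ) :
    J0e k θ = ∑ j ∈ range (k+1), Mcoef k j * Real.cos (j * θ) := by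
  rcases Nat.eq_zero_or_pos k with hk | hk
  · subst hk; simp [J0e, Mcoef, lamJ]
  rw [sum_range_succ]
  have hdiag : Mcoef k k = lamJ k := by simp [Mcoef]
  rw [hdiag]
  rcases Nat.even_or_odd k with ⟨p, hp⟩ | ⟨p, hp⟩
  · -- k = 2p, p ≥ 1
    have hp' : k = 2 * p := by omega
    have hpp : 0 < p := by omega
    have hne : k ≠ 0 := by omega
    have heven : Even k := ⟨p, hp⟩
    rw [J0e, if_neg hne, if_pos heven]
    have hrange : range k = range (2*p) := by rw [hp']
    have hvan : ∀ j, j % 2 = 1 → Mcoef k j * Real.cos ((j:ℕ) * θ) = 0 := by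
      intro j hj
      have : Mcoef k j = 0 := by
        unfold Mcoef
        rw [if_neg (by omega), if_neg (by push_neg; intro hpar; omega)]
      rw [this]; ring
    have hsum : ∑ j ∈ range k, Mcoef k j * Real.cos (j * θ)
        = ∑ i ∈ range p, Mcoef k (2*i) * Real.cos ((2*i : ℕ) * θ) := by
      rw [hrange]
      exact sum_even_helper p _ hvan
    rw [hsum]
    have hk2 : k / 2 = p := by omega
    rw [hk2]
    rw [Finset.mul_sum]
    have : ∀ i ∈ range p,
        Mcoef k (2*i) * Real.cos ((2*i : ℕ) * θ)
        = -((1 / (2 * (k:ℝ))) * ((1 - (if i = 0 then (1:ℝ) else 0) / 2) * Real.cos (2 * (i:ℝ) * θ))) := by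
      intro i hi
      have hmem : i < p := mem_range.mp hi
      have : Mcoef k (2*i) = -(1/(2*(k:ℝ))) * (1 - (if i = 0 then (1:ℝ) else 0)/2) := by
        unfold Mcoef
        rw [if_neg (by omega), if_pos ⟨by omega, by omega⟩]
        congr 2
        by_cases h0 : i = 0 <;> simp [h0]
      rw [this]
      push_cast
      ring
    rw [Finset.sum_congr rfl this, Finset.sum_neg_distrib]
    ring
  · -- k = 2p+1
    have hp' : k = 2 * p + 1 := by omega
    have hne : k ≠ 0 := by omega
    have hodd : ¬ Even k := by rw [hp']; simp [Nat.even_add_one, Nat.even_mul]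
    rw [J0e, if_neg hne, if_neg hodd]
    have hrange : range k = range (2*p+1) := by rw [hp']
    have hvan : ∀ j, j % 2 = 0 → Mcoef k j * Real.cos ((j:ℕ) * θ) = 0 := by
      intro j hj
      have : Mcoef k j = 0 := by
        unfold Mcoef
        rw [if_neg (by omega), if_neg (by push_neg; intro hpar; omega)]
      rw [this]; ring
    have hsum : ∑ j ∈ range k, Mcoef k j * Real.cos (j * θ)
        = ∑ i ∈ range p, Mcoef k (2*i+1) * Real.cos ((2*i+1 : ℕ) * θ) := by
      rw [hrange]
      exact sum_odd_helper p _ hvan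
    have hk2 : k / 2 = p := by omega
    rw [hsum, hk2, Finset.mul_sum]
    have : ∀ i ∈ range p,
        Mcoef k (2*i+1) * Real.cos ((2*i+1 : ℕ) * θ)
        = -((1 / (2 * (k:ℝ))) * Real.cos ((2 * (i:ℝ) + 1) * θ)) := by
      intro i hi
      have hmem : i < p := mem_range.mp hi
      have : Mcoef k (2*i+1) = -(1/(2*(k:ℝ))) := by
        unfold Mcoef
        rw [if_neg (by omega), if_pos ⟨by omega, by omega⟩, if_neg (by omega)]
        ring
      rw [this]
      push_cast
      ring
    rw [Finset.sum_congr rfl this, Finset.sum_neg_distrib]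
    ring

noncomputable def coef (n j : ℕ) : ℝ :=
  if n ≤ j then (if j = n then 1 else 0)
  else (∑ k ∈ (Finset.Ioc j n).attach, coef n k.1 * Mcoef k.1 j) / (lamJ n - lamJ j)
termination_by n - j
decreasing_by
  have hk := Finset.mem_Ioc.mp k.2
  omega

lemma coef_self (n : ℕ) : coef n n = 1 := by
  rw [coef]; simp

lemma coef_of_gt {n k : ℕ} (h : n < k) : coef n k = 0 := by
  rw [coef, if_pos (le_of_lt h), if_neg (by omega)]

lemma eigen_col (n j : ℕ) (hj : j ≤ n) :
    ∑ k ∈ range (n+1), coef n k * Mcoef k j = lamJ n * coef n j := by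
  have h1 : range (n+1) = Finset.Ico 0 (n+1) := by rw [Finset.range_eq_Ico]
  rw [h1, ← Finset.sum_Ico_consecutive _ (Nat.zero_le j) (by omega)]
  have hzero : ∑ k ∈ Finset.Ico 0 j, coef n k * Mcoef k j = 0 := by
    apply Finset.sum_eq_zero
    intro k hk
    have := Finset.mem_Ico.mp hk
    rw [Mcoef_eq_zero_of_lt this.2]; ring
  rw [hzero, zero_add, Finset.Ico_add_one_right_eq_Icc, Finset.Icc_eq_cons_Ioc hj, Finset.sum_cons]
  have hdiag : Mcoef j j = lamJ j := by simp [Mcoef]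
  rw [hdiag]
  rcases eq_or_lt_of_le hj with heq | hlt
  · subst heq
    simp [mul_comm]
  · have hS : coef n j * (lamJ n - lamJ j)
        = ∑ k ∈ Finset.Ioc j n, coef n k * Mcoef k j := by
      rw [coef]
      rw [if_neg (by omega)]
      rw [div_mul_cancel₀ _ (sub_ne_zero.mpr (lamJ_ne hlt))]
      exact Finset.sum_attach (Finset.Ioc j n) (fun k => coef n k * Mcoef k j)
    linarith [hS]


/-- For every `n` there is an eigenvector `v_n` of `J₀` with eigenvalue `λ_n`, given by a
linear combination of `e₀, …, e_n` with nonzero coefficient of `e_n`. -/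
theorem J0_eigenvalues (n : ℕ) :
    ∃ c : ℕ → ℝ, c n ≠ 0 ∧ (∀ k : ℕ, n < k → c k = 0) ∧
      ∀ θ : ℝ,
        ∑ k ∈ Finset.range (n + 1), c k * J0e k θ
          = lamJ n * ∑ k ∈ Finset.range (n + 1), c k * Real.cos (k * θ) := by
  refine ⟨coef n, by rw [coef_self]; norm_num, fun k hk => coef_of_gt hk, fun θ => ?_⟩
  have hL : ∀ k ∈ range (n+1), coef n k * J0e k θ
      = ∑ j ∈ range (n+1), coef n k * (Mcoef k j * Real.cos (j*θ)) := by
    intro k hk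
    rw [J0e_eq, Finset.mul_sum]
    apply Finset.sum_subset
    · intro j hj
      have h1 := mem_range.mp hj
      have h2 := mem_range.mp hk
      exact mem_range.mpr (by omega)
    · intro j _ hnj
      have hkj : k < j := by
        by_contra hc
        exact hnj (mem_range.mpr (by omega))
      rw [Mcoef_eq_zero_of_lt hkj]; ring
  calc ∑ k ∈ range (n+1), coef n k * J0e k θ
      = ∑ k ∈ range (n+1), ∑ j ∈ range (n+1),
          coef n k * (Mcoef k j * Real.cos (j*θ)) := Finset.sum_congr rfl hL
    _ = ∑ j ∈ range (n+1),
          (∑ k ∈ range (n+1), coef n k * Mcoef k j) * Real.cos (j*θ) := by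
        rw [Finset.sum_comm]
        refine Finset.sum_congr rfl fun j _ => ?_
        rw [Finset.sum_mul]
        exact Finset.sum_congr rfl fun k _ => by ring
    _ = ∑ j ∈ range (n+1), (lamJ n * coef n j) * Real.cos (j*θ) := by
        refine Finset.sum_congr rfl fun j hj => ?_
        rw [eigen_col n j (by have := mem_range.mp hj; omega)]
    _ = lamJ n * ∑ j ∈ range (n+1), coef n j * Real.cos (j*θ) := by
        rw [Finset.mul_sum]
        exact Finset.sum_congr rfl fun j _ => by ring
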